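/- Let G be a middle and right nuclear normal subgroup of a loop L. Then the image of the map x ↦ T_x|_G : L → Aut(G) consists entirely of inner automorphisms of G if and only if there exists a left transversal Σ of L/G that is contained in the commutant C_L(G) = {u ∈ L : u·s = s·u for all s ∈ G}. -/
import Mathlib


universe u v

/-- A loop: a type with a multiplication all of whose left and right translations
are bijective, together with a two-sided identity element. -/
class MLoop (L : Type u) extends Mul L, One L where
  mul_left_bij : ∀ x : L, Function.Bijective fun y : L => x * y
  mul_right_bij : ∀ x : L, Function.Bijective fun y : L => y * x
  one_mul : ∀ x : L, 1 * x = x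
  mul_one : ∀ x : L, x * 1 = x

instance (L : Type u) [MLoop L] : Nonempty L := ⟨1⟩

/-- Left division `x \ y = λ_x⁻¹ y`. -/
noncomputable def MLoop.ldiv {L : Type u} [MLoop L] (x y : L) : L :=
  Function.invFun (fun z : L => x * z) y

/-- Right division `x / y = ρ_y⁻¹ x`. -/
noncomputable def MLoop.rdiv {L : Type u} [MLoop L] (x y : L) : L :=
  Function.invFun (fun z : L => z * y) x

/-- Middle inner mapping `T_x = ρ_x⁻¹ ∘ λ_x`, i.e. `T_x t` is the unique `z` with
`z * x = x * t`. -/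
noncomputable def MLoop.midInner {L : Type u} [MLoop L] (x t : L) : L :=
  Function.invFun (fun z : L => z * x) (x * t)

/-- The left nucleus of a multiplicative structure. -/
def leftNucleus (L : Type u) [Mul L] : Set L :=
  {u : L | ∀ x y : L, u * x * y = u * (x * y)}

/-- The right nucleus of a multiplicative structure. -/
def rightNucleus (L : Type u) [Mul L] : Set L :=
  {u : L | ∀ x y : L, x * y * u = x * (y * u)}

/-- The middle nucleus of a multiplicative structure. -/
def middleNucleus (L : Type u) [Mul L] : Set L :=
  {u : L | ∀ x y : L, x * u * y = x * (u * y)}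

/-- A subset of a loop is a normal subloop if it is the kernel of a loop homomorphism. -/
def IsNormalSubloop {L : Type u} [MLoop L] (N : Set L) : Prop :=
  ∃ (M : Type u) (i : MLoop M) (f : L → M),
    (∀ x y : L, f (x * y) = i.toMul.mul (f x) (f y)) ∧ N = {x : L | f x = i.toOne.one}

/-- The data `(Θ, f)` of a Schreier extension of the group `G` by the loop `K`. -/
structure SchreierData (K : Type u) (G : Type v) [MLoop K] [Group G] where
  Θ : K → G ≃* G
  f : K → K → G
  theta_one : Θ 1 = MulEquiv.refl G
  f_one_left : ∀ σ : K, f 1 σ = 1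
  f_one_right : ∀ σ : K, f σ 1 = 1

/-- The multiplication of the Schreier loop `L(Θ,f)` on `K × G`:
`(τ,t)∘(σ,s) = (τσ, f(τ,σ)·Θ_σ(t)·s)`. -/
def SchreierData.mul {K : Type u} {G : Type v} [MLoop K] [Group G]
    (D : SchreierData K G) (p q : K × G) : K × G :=
  (p.1 * q.1, D.f p.1 q.1 * D.Θ q.1 p.2 * q.2)

section Aux

variable {L : Type u} [MLoop L]

lemma MLoop.rcancel {x a b : L} (h : a * x = b * x) : a = b :=
  (MLoop.mul_right_bij x).1 h

lemma MLoop.lcancel {x a b : L} (h : x * a = x * b) : a = b :=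
  (MLoop.mul_left_bij x).1 h

lemma MLoop.midInner_spec (x t : L) : MLoop.midInner x t * x = x * t :=
  Function.invFun_eq ((MLoop.mul_right_bij x).2 (x * t))

lemma MLoop.midInner_eq_of {x t z : L} (h : z * x = x * t) : MLoop.midInner x t = z :=
  MLoop.rcancel ((MLoop.midInner_spec x t).trans h.symm)

lemma MLoop.ldiv_spec (x y : L) : x * MLoop.ldiv x y = y :=
  Function.invFun_eq ((MLoop.mul_left_bij x).2 y)

end Aux

/-- for a middle and right nuclear normal subgroup `G` of a loop `L`, every
restricted middle inner mapping `T_x|_G` (`x ∈ L`) is an inner automorphism of `G` iff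
there is a left transversal `S` of `L/G` (a set of representatives of the left cosets of
`G` containing the identity) contained in the commutant
`C_L(G) = {u : u·s = s·u for all s ∈ G}`. -/
theorem schreier_stmt15 {L : Type u} [MLoop L] (G : Set L) [Group G]
    (hGmul : ∀ a b : G, ((a * b : G) : L) = (a : L) * (b : L))
    (hGone : ((1 : G) : L) = 1)
    (hnorm : IsNormalSubloop G)
    (hnuc : G ⊆ middleNucleus L ∩ rightNucleus L) :
    (∀ x : L, ∃ r : G, ∀ t : G,
        MLoop.midInner x (t : L) = ((r * t * r⁻¹ : G) : L)) ↔
      (∃ S : Set L, (1 : L) ∈ S ∧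
        (∀ x : L, ∃! s : L, s ∈ S ∧ ∃ g : G, s = x * (g : L)) ∧
        S ⊆ {u : L | ∀ g : G, u * (g : L) = (g : L) * u}) := by
  classical
  obtain ⟨M, i, f, hf, hker⟩ := hnorm
  letI : MLoop M := i
  have hf' : ∀ x y : L, f (x * y) = f x * f y := hf
  have hNm : ∀ (g : G) (x y : L), x * (g : L) * y = x * ((g : L) * y) :=
    fun g x y => (hnuc g.2).1 x y
  have hNr : ∀ (g : G) (x y : L), x * y * (g : L) = x * (y * (g : L)) :=
    fun g x y => (hnuc g.2).2 x y
  have hf1 : f 1 = 1 := by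
    have h1 : f ((1 : L) * 1) = f 1 * f 1 := hf' 1 1
    rw [MLoop.one_mul] at h1
    have : f 1 * f 1 = f 1 * 1 := by rw [MLoop.mul_one]; exact h1.symm
    exact (MLoop.lcancel this : f 1 = 1)
  have hmem : ∀ g : G, f (g : L) = 1 := fun g => hker ▸ g.2
  have hmemG : ∀ x : L, f x = 1 → x ∈ G := fun x h => by rw [hker]; exact h
  have hcoset2 : ∀ (x : L) (g : G), f (x * (g : L)) = f x := fun x g => by
    rw [hf', hmem, MLoop.mul_one]
  have hcoset : ∀ a b : L, f a = f b → ∃ g : G, a = b * (g : L) := by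
    intro a b hab
    have hb : b * MLoop.ldiv b a = a := MLoop.ldiv_spec b a
    have h2 : f b * f (MLoop.ldiv b a) = f b * 1 := by
      rw [MLoop.mul_one, ← hf', hb, hab]
    exact ⟨⟨MLoop.ldiv b a, hmemG _ (MLoop.lcancel h2)⟩, hb.symm⟩
  constructor
  · intro H
    choose r hr using H
    -- the commuting coset representatives
    set u : L → L := fun x => if f x = 1 then 1 else x * ((r x)⁻¹ : G) with hu
    -- key commutation: for every x, `u x` commutes with all of G
    have step1 : ∀ x : L, ((r x)⁻¹ : G) * x = x * ((r x)⁻¹ : G) := by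
      intro x
      have h := hr x (r x)⁻¹
      rw [mul_inv_cancel, one_mul] at h
      have := MLoop.midInner_spec x (((r x)⁻¹ : G) : L)
      rw [h] at this
      exact this
    have hu_comm : ∀ (x : L) (g : G), u x * (g : L) = (g : L) * u x := by
      intro x g
      by_cases hx : f x = 1
      · simp only [hu, if_pos hx]
        rw [MLoop.one_mul, MLoop.mul_one]
      · simp only [hu, if_neg hx]
        have hspec := MLoop.midInner_spec x ((g : G) : L)
        rw [hr x g] at hspec
        calc x * ((r x)⁻¹ : G) * (g : L)
            = ((r x)⁻¹ : G) * x * (g : L) := by rw [step1]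
          _ = ((r x)⁻¹ : G) * (x * (g : L)) := hNr g _ x
          _ = ((r x)⁻¹ : G) * (((r x * g * (r x)⁻¹ : G) : L) * x) := by rw [← hspec]
          _ = ((r x)⁻¹ : G) * ((r x * g * (r x)⁻¹ : G) : L) * x :=
              (hNm (r x * g * (r x)⁻¹) _ x).symm
          _ = (((r x)⁻¹ * (r x * g * (r x)⁻¹) : G) : L) * x := by
              rw [hGmul (r x)⁻¹ (r x * g * (r x)⁻¹)]
          _ = ((g * (r x)⁻¹ : G) : L) * x := by group
          _ = (g : L) * ((r x)⁻¹ : G) * x := by rw [hGmul]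
          _ = (g : L) * (((r x)⁻¹ : G) * x) := hNm (r x)⁻¹ (g : L) x
          _ = (g : L) * (x * ((r x)⁻¹ : G)) := by rw [step1]
    have hu_f : ∀ x : L, f (u x) = f x := by
      intro x
      by_cases hx : f x = 1
      · simp only [hu, if_pos hx, hf1, hx]
      · simp only [hu, if_neg hx]; exact hcoset2 x _
    set st : Setoid L := ⟨fun a b => f a = f b,
      ⟨fun _ => rfl, fun h => h.symm, fun h1 h2 => h1.trans h2⟩⟩ with hst
    refine ⟨Set.range (fun q : Quotient st => u q.out), ?_, ?_, ?_⟩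
    · refine ⟨Quotient.mk st 1, ?_⟩
      have h1 : f (Quotient.mk st 1).out = f 1 := Quotient.mk_out (s := st) 1
      simp only [hu, if_pos (h1.trans hf1)]
    · intro x
      have hyx : f (Quotient.mk st x).out = f x := Quotient.mk_out (s := st) x
      obtain ⟨g, hg⟩ := hcoset (u (Quotient.mk st x).out) x ((hu_f _).trans hyx)
      refine ⟨u (Quotient.mk st x).out, ⟨⟨Quotient.mk st x, rfl⟩, g, hg⟩, ?_⟩
      rintro s' ⟨⟨q', rfl⟩, g', hg'⟩
      have hg'' : u q'.out = x * (g' : L) := hg'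
      have h1 : f q'.out = f x := by
        have := hu_f q'.out
        rw [hg'', hcoset2 x g'] at this
        exact this.symm
      have hq : q' = Quotient.mk st x := by
        rw [← Quotient.out_eq q']
        exact Quotient.sound h1
      show u q'.out = u (Quotient.mk st x).out
      rw [hq]
    · rintro s ⟨q, rfl⟩ g
      exact hu_comm q.out g
  · rintro ⟨S, _h1, h2, h3⟩ x
    obtain ⟨s, ⟨hsS, g, hs⟩, -⟩ := h2 x
    refine ⟨g⁻¹, fun t => MLoop.midInner_eq_of ?_⟩
    have hsg : s * ((g⁻¹ : G) : L) = x := by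
      rw [hs, hNm g x ((g⁻¹ : G) : L), ← hGmul, mul_inv_cancel, hGone, MLoop.mul_one]
    apply MLoop.rcancel (x := (g : L))
    calc ((g⁻¹ * t * g⁻¹⁻¹ : G) : L) * x * (g : L)
        = ((g⁻¹ * t * g⁻¹⁻¹ : G) : L) * (x * (g : L)) := hNr g _ x
      _ = ((g⁻¹ * t * g⁻¹⁻¹ : G) : L) * s := by rw [← hs]
      _ = s * ((g⁻¹ * t * g⁻¹⁻¹ : G) : L) := (h3 hsS _).symm
      _ = s * (((g⁻¹ : G) : L) * ((t * g : G) : L)) := by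
            rw [← hGmul]; congr 1; group
      _ = s * ((g⁻¹ : G) : L) * ((t * g : G) : L) := (hNm g⁻¹ s _).symm
      _ = x * ((t * g : G) : L) := by rw [hsg]
      _ = x * ((t : L) * (g : L)) := by rw [hGmul]
      _ = x * (t : L) * (g : L) := (hNm t x (g : L)).symm
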